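/- Let G be a locally compact groupoid admitting a Haar system (μ^x)_{x∈X}, and suppose each μ^x has support equal to G^x = r⁻¹(x), each μ^x is left-invariant under composition, and x ↦ ∫ φ dμ^x is continuous for each φ ∈ C_c(G). Then the range map r : G → X is open. -/

import Mathlib

/-- A topological groupoid with arrow space `H` over the object space `X`.
Composition is a total function, subject to axioms only on composable pairs
(`s g = r h`). -/
structure TopGroupoid (H X : Type*) [TopologicalSpace H] [TopologicalSpace X] where
  r : H → X
  s : H → X
  ε : X → H
  mul : H → H → H
  inv : H → H
  continuous_r : Continuous r
  continuous_s : Continuous s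
  continuous_ε : Continuous ε
  continuous_inv : Continuous inv
  continuous_mul : Continuous fun p : {p : H × H // s p.1 = r p.2} => mul p.1.1 p.1.2
  r_ε : ∀ x, r (ε x) = x
  s_ε : ∀ x, s (ε x) = x
  r_mul : ∀ g h, s g = r h → r (mul g h) = r g
  s_mul : ∀ g h, s g = r h → s (mul g h) = s h
  mul_ε : ∀ g, mul g (ε (s g)) = g
  ε_mul : ∀ g, mul (ε (r g)) g = g
  r_inv : ∀ g, r (inv g) = s g
  s_inv : ∀ g, s (inv g) = r g
  mul_inv : ∀ g, mul g (inv g) = ε (r g)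
  inv_mul : ∀ g, mul (inv g) g = ε (s g)
  mul_assoc : ∀ g h k, s g = r h → s h = r k → mul (mul g h) k = mul g (mul h k)

open MeasureTheory Topology

/-- The support of a measure. -/
def mSupport {X : Type*} [TopologicalSpace X] [MeasurableSpace X] (m : Measure X) : Set X :=
  {x | ∀ U : Set X, IsOpen U → x ∈ U → 0 < m U}

/-- An open set of positive measure (w.r.t. an inner regular measure) meets the support. -/
lemma meets_mSupport {Y : Type*} [TopologicalSpace Y] [MeasurableSpace Y]
    (m : Measure Y) (hreg : m.Regular) {V : Set Y} (hV : IsOpen V) (hpos : 0 < m V) :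
    ∃ y ∈ V, y ∈ mSupport m := by
  by_contra hcon
  push_neg at hcon
  have hcon' : ∀ y ∈ V, ∃ W : Set Y, IsOpen W ∧ y ∈ W ∧ ¬ 0 < m W := by
    intro y hy
    have h := hcon y hy
    simp only [mSupport, Set.mem_setOf_eq] at h
    push_neg at h
    obtain ⟨W, hWo, hyW, hW0⟩ := h
    exact ⟨W, hWo, hyW, not_lt.2 hW0⟩
  obtain ⟨K, hKV, hKcomp, hKpos⟩ := hreg.innerRegular hV 0 hpos
  have hnbd : ∀ y : Y, ∃ W : Set Y, y ∈ K → IsOpen W ∧ y ∈ W ∧ m W = 0 := by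
    intro y
    by_cases hy : y ∈ K
    · obtain ⟨W, hWo, hyW, hW0⟩ := hcon' y (hKV hy)
      exact ⟨W, fun _ => ⟨hWo, hyW, le_antisymm (not_lt.1 hW0) (by simp)⟩⟩
    · exact ⟨Set.univ, fun h => absurd h hy⟩
  choose W hW using hnbd
  obtain ⟨t, htK, hcover⟩ := hKcomp.elim_nhds_subcover W
    (fun y hy => ((hW y hy).1).mem_nhds (hW y hy).2.1)
  have : m K = 0 := by
    refine le_antisymm ?_ (by simp)
    calc m K ≤ m (⋃ y ∈ t, W y) := measure_mono hcover
      _ ≤ ∑ y ∈ t, m (W y) := measure_biUnion_finset_le t W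
      _ = 0 := Finset.sum_eq_zero fun y hy => (hW y (htK y hy)).2.2
  exact absurd this hKpos.ne'

/-- If a locally compact groupoid admits a Haar system `(μ^x)` — Radon measures with
`supp μ^x = G^x = r⁻¹(x)`, left invariance `∫ φ(αg) dμ^{s α}(g) = ∫ φ dμ^{r α}`, and
continuity of `x ↦ μ^x(φ)` for `φ ∈ C_c(G)` — then the range map is open. -/
theorem stmt_15 {H X : Type*} [TopologicalSpace H] [LocallyCompactSpace H] [T2Space H]
    [TopologicalSpace X] [LocallyCompactSpace X] [T2Space X]
    [MeasurableSpace H] [BorelSpace H]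
    (G : TopGroupoid H X) (μ : X → Measure H)
    (hRadon : ∀ x, (μ x).Regular)
    (hsupp : ∀ x, mSupport (μ x) = G.r ⁻¹' {x})
    (hinv : ∀ (α : H) (φ : H → ℝ), Continuous φ → HasCompactSupport φ →
      ∫ g, φ (G.mul α g) ∂(μ (G.s α)) = ∫ g, φ g ∂(μ (G.r α)))
    (hcont : ∀ φ : H → ℝ, Continuous φ → HasCompactSupport φ →
      Continuous fun x => ∫ g, φ g ∂(μ x)) :
    IsOpenMap G.r := by
  intro U hU
  rw [isOpen_iff_mem_nhds]
  rintro x ⟨g, hgU, rfl⟩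
  obtain ⟨φ, hφ1, hφ0, hφc, hφrange⟩ :=
    exists_continuous_one_zero_of_isCompact (isCompact_singleton (x := g))
      hU.isClosed_compl (by simpa [Set.disjoint_singleton_left] using hgU)
  have hφcont : Continuous ⇑φ := φ.continuous
  have hnn : ∀ y, 0 ≤ φ y := fun y => (hφrange y).1
  have hsub : Function.support ⇑φ ⊆ U := by
    intro y hy
    by_contra h
    exact hy (hφ0 h)
  have hSopen : IsOpen (Function.support ⇑φ) := hφcont.isOpen_support
  have hint : ∀ x, Integrable ⇑φ (μ x) := fun x => by
    haveI := hRadon x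
    exact hφcont.integrable_of_hasCompactSupport hφc
  set W : Set X := {x | 0 < ∫ h, φ h ∂(μ x)} with hW
  have hWopen : IsOpen W := isOpen_lt continuous_const (hcont ⇑φ hφcont hφc)
  have hmem : G.r g ∈ W := by
    rw [hW, Set.mem_setOf_eq, integral_pos_iff_support_of_nonneg hnn (hint _)]
    have hg : g ∈ mSupport (μ (G.r g)) := by
      rw [hsupp]; exact rfl
    refine hg _ hSopen ?_
    simp [Function.mem_support, hφ1 (Set.mem_singleton g)]
  have hWsub : W ⊆ G.r '' U := by
    intro x hx
    rw [hW, Set.mem_setOf_eq, integral_pos_iff_support_of_nonneg hnn (hint _)] at hx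
    obtain ⟨y, hyS, hymem⟩ := meets_mSupport (μ x) (hRadon x) hSopen hx
    rw [hsupp] at hymem
    exact ⟨y, hsub hyS, hymem⟩
  exact Filter.mem_of_superset (hWopen.mem_nhds hmem) hWsub
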